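/- arXiv:2109.00204 — 3 statements merged into one kernel-verified Lean document; each statement's English description precedes it below -/
import Mathlib

section
/- The orthogonal complement 𝔥^⊥ = {ξ ∈ 𝔤 : B(ξ, η) = 0 for all η ∈ 𝔥} is exactly the set of pairs (Y, Z) ∈ 𝔤 for which there exist A, C ∈ 𝔰𝔭(W) and B₀ ∈ End(W) such that Y = −(A + C) and Z(u₁, u₂) = (A u₁ + B₀ u₂, −B₀⋆ u₁ + C u₂) for all (u₁, u₂) ∈ W ⊕ W. (Computation of 𝔥^⊥ in Appendix B of the paper.) -/
open LinearMap

section Aux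

variable {W : Type*} [AddCommGroup W] [Module ℂ W] [FiniteDimensional ℂ W]

lemma trace_rankOne (f : W →ₗ[ℂ] ℂ) (v : W) :
    LinearMap.trace ℂ W (LinearMap.smulRight f v) = f v := by
  have h : LinearMap.smulRight f v = dualTensorHom ℂ W W (f ⊗ₜ v) := by
    ext x; simp
  rw [h, LinearMap.trace_eq_contract_apply, contractLeft_apply]

lemma trace_block (F : W × W →ₗ[ℂ] W × W) :
    LinearMap.trace ℂ (W × W) F =
      LinearMap.trace ℂ W (fst ℂ W W ∘ₗ F ∘ₗ inl ℂ W W) +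
      LinearMap.trace ℂ W (snd ℂ W W ∘ₗ F ∘ₗ inr ℂ W W) := by
  have hF : F = inl ℂ W W ∘ₗ (fst ℂ W W ∘ₗ F) + inr ℂ W W ∘ₗ (snd ℂ W W ∘ₗ F) := by
    ext p <;> simp
  calc LinearMap.trace ℂ (W × W) F
      = LinearMap.trace ℂ (W × W) (inl ℂ W W ∘ₗ (fst ℂ W W ∘ₗ F))
        + LinearMap.trace ℂ (W × W) (inr ℂ W W ∘ₗ (snd ℂ W W ∘ₗ F)) := by
        rw [← map_add]; exact congrArg _ hF
    _ = _ := by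
        rw [LinearMap.trace_comp_comm' (fst ℂ W W ∘ₗ F) (inl ℂ W W),
            LinearMap.trace_comp_comm' (snd ℂ W W ∘ₗ F) (inr ℂ W W),
            LinearMap.comp_assoc, LinearMap.comp_assoc]

lemma sp_trace_nondeg (ω : W →ₗ[ℂ] W →ₗ[ℂ] ℂ)
    (hω_alt : ∀ u : W, ω u u = 0)
    (hω_nondeg : ∀ u : W, (∀ w : W, ω u w = 0) → u = 0)
    (S : W →ₗ[ℂ] W) (hS : ∀ u w : W, ω (S u) w + ω u (S w) = 0)
    (h : ∀ T : W →ₗ[ℂ] W, (∀ u w : W, ω (T u) w + ω u (T w) = 0) →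
      LinearMap.trace ℂ W (S ∘ₗ T) = 0) : S = 0 := by
  have hskew : ∀ a b : W, ω a b = -ω b a := by
    intro a b
    have h2 := hω_alt (a + b)
    simp only [map_add, LinearMap.add_apply, hω_alt, zero_add, add_zero] at h2
    linear_combination h2
  ext u
  simp only [LinearMap.zero_apply]
  apply hω_nondeg
  intro v
  set T : W →ₗ[ℂ] W :=
    LinearMap.smulRight (ω.flip u) v + LinearMap.smulRight (ω.flip v) u with hT
  have hTsp : ∀ a b : W, ω (T a) b + ω a (T b) = 0 := by
    intro a b
    simp only [hT, LinearMap.add_apply, smulRight_apply, flip_apply, map_add, map_smul,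
      LinearMap.smul_apply, smul_eq_mul]
    rw [hskew v b, hskew u b]
    ring
  have htr := h T hTsp
  have hcomp : S ∘ₗ T =
      LinearMap.smulRight (ω.flip u) (S v) + LinearMap.smulRight (ω.flip v) (S u) := by
    ext x; simp [hT]
  rw [hcomp, map_add, trace_rankOne, trace_rankOne, flip_apply, flip_apply] at htr
  have h5 : ω (S v) u = ω (S u) v := by
    have h6 := hS v u
    rw [hskew v (S u)] at h6
    linear_combination h6
  linear_combination (htr - h5) / 2

end Aux

/-- computation of `𝔥^⊥` inside `𝔤 = 𝔰𝔭(W) × 𝔰𝔭(W ⊕ W)`, where `𝔥` is the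
diagonal copy of `𝔰𝔭(W)` embedded by `T ↦ (T, T ⊕ T)` and the form on `𝔤` is the trace form.
A pair `(Y, Z) ∈ 𝔤` is orthogonal to `𝔥` if and only if there are `A, C ∈ 𝔰𝔭(W)` and
`B₀ ∈ End(W)` (with ω-adjoint `Bs`) such that `Y = -(A + C)` and
`Z (u₁, u₂) = (A u₁ + B₀ u₂, -B₀⋆ u₁ + C u₂)`. -/
theorem mem_h_perp_iff
    (W : Type*) [AddCommGroup W] [Module ℂ W] [FiniteDimensional ℂ W]
    (ω : W →ₗ[ℂ] W →ₗ[ℂ] ℂ)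
    (hω_alt : ∀ u : W, ω u u = 0)
    (hω_nondeg : ∀ u : W, (∀ w : W, ω u w = 0) → u = 0)
    (Y : W →ₗ[ℂ] W) (Z : W × W →ₗ[ℂ] W × W)
    (hY : ∀ u w : W, ω (Y u) w + ω u (Y w) = 0)
    (hZ : ∀ p q : W × W,
      (ω (Z p).1 q.1 + ω (Z p).2 q.2) + (ω p.1 (Z q).1 + ω p.2 (Z q).2) = 0) :
    (∀ T : W →ₗ[ℂ] W, (∀ u w : W, ω (T u) w + ω u (T w) = 0) →
        LinearMap.trace ℂ W (Y ∘ₗ T) +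
          LinearMap.trace ℂ (W × W) (Z ∘ₗ (T.prodMap T)) = 0) ↔
      ∃ A C B₀ Bs : W →ₗ[ℂ] W,
        (∀ u w : W, ω (A u) w + ω u (A w) = 0) ∧
        (∀ u w : W, ω (C u) w + ω u (C w) = 0) ∧
        (∀ u w : W, ω (B₀ u) w = ω u (Bs w)) ∧
        Y = -(A + C) ∧
        (∀ u₁ u₂ : W, Z (u₁, u₂) = (A u₁ + B₀ u₂, -(Bs u₁) + C u₂)) := by
  constructor
  · intro h
    set A : W →ₗ[ℂ] W := fst ℂ W W ∘ₗ Z ∘ₗ inl ℂ W W with hAdef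
    set B₀ : W →ₗ[ℂ] W := fst ℂ W W ∘ₗ Z ∘ₗ inr ℂ W W with hBdef
    set D : W →ₗ[ℂ] W := snd ℂ W W ∘ₗ Z ∘ₗ inl ℂ W W with hDdef
    set C : W →ₗ[ℂ] W := snd ℂ W W ∘ₗ Z ∘ₗ inr ℂ W W with hCdef
    have hA : ∀ u w : W, ω (A u) w + ω u (A w) = 0 := by
      intro u w
      have := hZ (u, 0) (w, 0)
      simpa [hAdef] using this
    have hC : ∀ u w : W, ω (C u) w + ω u (C w) = 0 := by
      intro u w
      have := hZ (0, u) (0, w)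
      simpa [hCdef] using this
    have hB : ∀ u w : W, ω (B₀ u) w = ω u ((-D) w) := by
      intro u w
      have := hZ (0, u) (w, 0)
      simp only [map_zero, LinearMap.zero_apply, zero_add, add_zero] at this
      have h2 : ω (B₀ u) w + ω u (D w) = 0 := by
        simpa [hBdef, hDdef] using this
      simp only [LinearMap.neg_apply, map_neg]
      linear_combination h2
    have hZform : ∀ u₁ u₂ : W, Z (u₁, u₂) = (A u₁ + B₀ u₂, -((-D) u₁) + C u₂) := by
      intro u₁ u₂
      have hsplit : ((u₁, u₂) : W × W) = (u₁, 0) + (0, u₂) := by simp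
      rw [hsplit, map_add]
      apply Prod.ext <;> simp [hAdef, hBdef, hCdef, hDdef]
    -- now show Y = -(A+C)
    have hkey : Y + A + C = 0 := by
      apply sp_trace_nondeg ω hω_alt hω_nondeg
      · intro u w
        simp only [LinearMap.add_apply, map_add, LinearMap.add_apply]
        linear_combination hY u w + hA u w + hC u w
      · intro T hT
        have htr := h T hT
        have hblk := trace_block (Z ∘ₗ T.prodMap T)
        have e1 : fst ℂ W W ∘ₗ (Z ∘ₗ T.prodMap T) ∘ₗ inl ℂ W W = A ∘ₗ T := by
          ext x; simp [hAdef]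
        have e2 : snd ℂ W W ∘ₗ (Z ∘ₗ T.prodMap T) ∘ₗ inr ℂ W W = C ∘ₗ T := by
          ext x; simp [hCdef]
        rw [e1, e2] at hblk
        have e3 : (Y + A + C) ∘ₗ T = Y ∘ₗ T + A ∘ₗ T + C ∘ₗ T := by
          ext x; simp
        rw [e3, map_add, map_add]
        rw [hblk] at htr
        linear_combination htr
    refine ⟨A, C, B₀, -D, hA, hC, hB, ?_, ?_⟩
    · rw [add_assoc] at hkey
      exact eq_neg_of_add_eq_zero_left hkey
    · exact hZform
  · rintro ⟨A, C, B₀, Bs, hA, hC, hB, hYeq, hZform⟩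
    intro T hT
    have hblk := trace_block (Z ∘ₗ T.prodMap T)
    have e1 : fst ℂ W W ∘ₗ (Z ∘ₗ T.prodMap T) ∘ₗ inl ℂ W W = A ∘ₗ T := by
      ext x
      simp only [coe_comp, Function.comp_apply, inl_apply, prodMap_apply, map_zero,
        fst_apply]
      rw [hZform (T x) 0]
      simp
    have e2 : snd ℂ W W ∘ₗ (Z ∘ₗ T.prodMap T) ∘ₗ inr ℂ W W = C ∘ₗ T := by
      ext x
      simp only [coe_comp, Function.comp_apply, inr_apply, prodMap_apply, map_zero,
        snd_apply]
      rw [hZform 0 (T x)]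
      simp
    rw [e1, e2] at hblk
    rw [hblk, hYeq]
    have e3 : (-(A + C)) ∘ₗ T = -(A ∘ₗ T) + -(C ∘ₗ T) := by
      ext x; simp; abel
    rw [e3, map_add, map_neg, map_neg]
    ring
end

section
/- The set of pairs (Y, Z) ∈ 𝔥^⊥ such that Y has rank at most 1 and Z has rank at most 1 (i.e., (Y,Z) lies in the product of the closures of the minimal nilpotent orbits, which consist of the elements of rank at most one) is exactly the set of pairs ( −(a⊗a + b⊗b), Z_{a,b} ), where a, b ∈ W are linearly dependent vectors and Z_{a,b}(u₁, u₂) = ((a⊗a)u₁ + (a⊗b)u₂, (b⊗a)u₁ + (b⊗b)u₂). (The main computation of Appendix B of the paper.) -/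
open LinearMap in
lemma trace_smulRight_aux {M : Type*} [AddCommGroup M] [Module ℂ M]
    [Module.Free ℂ M] [Module.Finite ℂ M] (f : M →ₗ[ℂ] ℂ) (m : M) :
    LinearMap.trace ℂ M (f.smulRight m) = f m := by
  have h := LinearMap.trace_eq_contract_apply ℂ M (f ⊗ₜ[ℂ] m)
  rw [contractLeft_apply] at h
  rw [← h]
  exact congrArg _ (by ext x; simp)

lemma rank_one_sp {V : Type*} [AddCommGroup V] [Module ℂ V]
    (Ω : V →ₗ[ℂ] V →ₗ[ℂ] ℂ)
    (halt : ∀ v, Ω v v = 0)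
    (hnd : ∀ u : V, (∀ w, Ω u w = 0) → u = 0)
    (X : V →ₗ[ℂ] V)
    (hsp : ∀ u w, Ω (X u) w + Ω u (X w) = 0)
    (hr : LinearMap.rank X ≤ 1) :
    ∃ s : V, ∀ u, X u = Ω s u • s := by
  have hskew : ∀ u w, Ω u w = -Ω w u := by
    intro u w
    have h := halt (u + w)
    simp only [map_add, LinearMap.add_apply] at h
    rw [halt u, halt w] at h
    linear_combination h
  have hswap : ∀ u w, Ω (X u) w = Ω (X w) u := by
    intro u w
    have h1 := hsp u w
    have h2 := hskew u (X w)
    linear_combination h1 - h2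
  have hmul : ∃ v : V, ∀ u : V, ∃ c : ℂ, X u = c • v := by
    obtain ⟨v₀, hv₀⟩ := rank_le_one_iff.mp hr
    refine ⟨(v₀ : V), fun u => ?_⟩
    obtain ⟨c, hc⟩ := hv₀ ⟨X u, LinearMap.mem_range_self X u⟩
    exact ⟨c, by simpa using congrArg Subtype.val hc.symm⟩
  obtain ⟨v, hv⟩ := hmul
  by_cases hX0 : ∀ u, X u = 0
  · exact ⟨0, fun u => by simp [hX0 u]⟩
  · push_neg at hX0
    obtain ⟨u₀, hu₀⟩ := hX0
    have hvne : v ≠ 0 := by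
      rintro rfl
      obtain ⟨c, hc⟩ := hv u₀
      simp only [smul_zero] at hc
      exact hu₀ hc
    have hex : ∃ w₁, Ω v w₁ ≠ 0 := by
      by_contra h
      push_neg at h
      exact hvne (hnd v h)
    obtain ⟨w₁, hw₁⟩ := hex
    obtain ⟨κ₀, hκ₀⟩ := hv w₁
    obtain ⟨ρ, hρ⟩ := IsAlgClosed.exists_pow_nat_eq (κ₀ / Ω v w₁) (n := 2) (by norm_num)
    have hρ' : ρ ^ 2 * Ω v w₁ = κ₀ := by rw [hρ]; field_simp
    refine ⟨ρ • v, fun u => ?_⟩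
    obtain ⟨c, hc⟩ := hv u
    have key := hswap u w₁
    rw [hc, hκ₀] at key
    simp only [map_smul, LinearMap.smul_apply, smul_eq_mul] at key
    rw [hc]
    rw [map_smul, LinearMap.smul_apply, smul_eq_mul, smul_smul]
    congr 1
    have hc' : c = κ₀ * Ω v u / Ω v w₁ := by field_simp; linear_combination key
    rw [hc']
    rw [← hρ']
    field_simp

lemma rank_le_one_of_range_le_span {M : Type*} [AddCommGroup M] [Module ℂ M]
    (f : M →ₗ[ℂ] M) (x : M)
    (h : ∀ u, f u ∈ Submodule.span ℂ ({x} : Set M)) : LinearMap.rank f ≤ 1 := by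
  have hle : LinearMap.range f ≤ Submodule.span ℂ {x} := by
    rintro _ ⟨u, rfl⟩; exact h u
  refine (Submodule.rank_mono hle).trans ?_
  simpa using rank_span_le (R := ℂ) ({x} : Set M)

/-- the elements of `𝔥^⊥ ⊆ 𝔤 = 𝔰𝔭(W) × 𝔰𝔭(W ⊕ W)` whose two components have
rank at most one (i.e. lie in the closures of the minimal nilpotent orbits) are exactly the
pairs `(-(a⊗a + b⊗b), Z_{a,b})` with `a, b ∈ W` linearly dependent, where
`Z_{a,b}(u₁,u₂) = ((a⊗a)u₁ + (a⊗b)u₂, (b⊗a)u₁ + (b⊗b)u₂)` and `a⊗b : u ↦ ω b u • a`. -/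
theorem h_perp_inter_min_orbits
    (W : Type*) [AddCommGroup W] [Module ℂ W] [FiniteDimensional ℂ W]
    (ω : W →ₗ[ℂ] W →ₗ[ℂ] ℂ)
    (hω_alt : ∀ u : W, ω u u = 0)
    (hω_nondeg : ∀ u : W, (∀ w : W, ω u w = 0) → u = 0)
    (Y : W →ₗ[ℂ] W) (Z : W × W →ₗ[ℂ] W × W) :
    ((∀ u w : W, ω (Y u) w + ω u (Y w) = 0) ∧
     (∀ p q : W × W,
        (ω (Z p).1 q.1 + ω (Z p).2 q.2) + (ω p.1 (Z q).1 + ω p.2 (Z q).2) = 0) ∧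
     (∀ T : W →ₗ[ℂ] W, (∀ u w : W, ω (T u) w + ω u (T w) = 0) →
        LinearMap.trace ℂ W (Y ∘ₗ T) +
          LinearMap.trace ℂ (W × W) (Z ∘ₗ (T.prodMap T)) = 0) ∧
     LinearMap.rank Y ≤ 1 ∧ LinearMap.rank Z ≤ 1) ↔
      ∃ a b : W, ¬ LinearIndependent ℂ ![a, b] ∧
        Y = -((ω a).smulRight a + (ω b).smulRight b) ∧
        (∀ u₁ u₂ : W,
          Z (u₁, u₂) = (ω a u₁ • a + ω b u₂ • a, ω a u₁ • b + ω b u₂ • b)) := by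
  have hskew : ∀ u w : W, ω u w = -ω w u := by
    intro u w
    have h := hω_alt (u + w)
    simp only [map_add, LinearMap.add_apply] at h
    rw [hω_alt u, hω_alt w] at h
    linear_combination h
  constructor
  · rintro ⟨hYsp, hZsp, htr, hrY, hrZ⟩
    set Ω₂ : (W × W) →ₗ[ℂ] (W × W) →ₗ[ℂ] ℂ :=
      LinearMap.mk₂ ℂ (fun p q => ω p.1 q.1 + ω p.2 q.2)
        (by intro p p' q; simp only [Prod.fst_add, Prod.snd_add, map_add,
              LinearMap.add_apply]; ring)
        (by intro c p q; simp only [Prod.smul_fst, Prod.smul_snd, map_smul,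
              LinearMap.smul_apply, smul_eq_mul]; ring)
        (by intro p q q'; simp only [Prod.fst_add, Prod.snd_add, map_add]; ring)
        (by intro c p q; simp only [Prod.smul_fst, Prod.smul_snd, map_smul,
              smul_eq_mul]; ring) with hΩ₂def
    have hΩ₂app : ∀ p q : W × W, Ω₂ p q = ω p.1 q.1 + ω p.2 q.2 := fun p q => rfl
    obtain ⟨s, hs⟩ := rank_one_sp ω hω_alt hω_nondeg Y hYsp hrY
    obtain ⟨t, ht⟩ := rank_one_sp Ω₂
      (fun p => by rw [hΩ₂app, hω_alt, hω_alt]; ring)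
      (fun p hp => by
        have h1 : p.1 = 0 := hω_nondeg p.1 (fun w => by
          have := hp (w, 0); rw [hΩ₂app] at this; simpa using this)
        have h2 : p.2 = 0 := hω_nondeg p.2 (fun w => by
          have := hp (0, w); rw [hΩ₂app] at this; simpa using this)
        exact Prod.ext h1 h2)
      Z (fun p q => by rw [hΩ₂app, hΩ₂app]; linear_combination hZsp p q) hrZ
    set a := t.1 with ha
    set b := t.2 with hb
    have quad : ∀ v : W, ω a v ^ 2 + ω b v ^ 2 + ω s v ^ 2 = 0 := by
      intro v
      set T : W →ₗ[ℂ] W := (ω v).smulRight v with hT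
      have hTsp : ∀ u w : W, ω (T u) w + ω u (T w) = 0 := by
        intro u w
        simp only [hT, LinearMap.smulRight_apply, map_smul, LinearMap.smul_apply,
          smul_eq_mul]
        linear_combination ω v w * hskew u v
      have h := htr T hTsp
      have hYT : Y ∘ₗ T = (ω v).smulRight (Y v) := by
        ext u
        simp [hT, map_smul]
      have hZT : Z ∘ₗ T.prodMap T =
          ((ω v).comp (LinearMap.fst ℂ W W)).smulRight (Z (v, 0)) +
          ((ω v).comp (LinearMap.snd ℂ W W)).smulRight (Z (0, v)) := by
        apply LinearMap.ext
        intro p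
        have hdec : ((T p.1, T p.2) : W × W) = ω v p.1 • (v, 0) + ω v p.2 • (0, v) := by
          simp [hT, Prod.ext_iff]
        simp only [LinearMap.comp_apply, LinearMap.prodMap_apply, LinearMap.add_apply,
          LinearMap.smulRight_apply, LinearMap.fst_apply, LinearMap.snd_apply]
        rw [show ((T p.1, T p.2) : W × W) = ω v p.1 • (v, 0) + ω v p.2 • (0, v) from hdec,
          map_add, map_smul, map_smul]
      rw [hYT, hZT, map_add, trace_smulRight_aux, trace_smulRight_aux,
        trace_smulRight_aux] at h
      rw [hs v, ht (v, 0), ht (0, v)] at h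
      simp only [hΩ₂app, map_zero, map_smul, LinearMap.smul_apply, smul_eq_mul,
        LinearMap.comp_apply, LinearMap.fst_apply, LinearMap.snd_apply,
        Prod.smul_fst, Prod.smul_snd, add_zero, zero_add, ← ha, ← hb] at h
      linear_combination -h + ω s v * hskew v s + ω a v * hskew v a + ω b v * hskew v b
    have bil : ∀ u w : W, ω a u * ω a w + ω b u * ω b w + ω s u * ω s w = 0 := by
      intro u w
      have h1 := quad (u + w)
      rw [map_add, map_add, map_add] at h1
      linear_combination (h1 - quad u - quad w) / 2
    have hYeq : Y = -((ω a).smulRight a + (ω b).smulRight b) := by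
      ext u
      have hd : Y u + (ω a u • a + ω b u • b) = 0 := by
        apply hω_nondeg
        intro w
        rw [hs u]
        simp only [map_add, map_smul, LinearMap.add_apply, LinearMap.smul_apply,
          smul_eq_mul]
        linear_combination bil u w
      simp only [LinearMap.neg_apply, LinearMap.add_apply, LinearMap.smulRight_apply]
      exact eq_neg_of_add_eq_zero_left (by linear_combination (norm := module) hd)
    have hZeq : ∀ u₁ u₂ : W,
        Z (u₁, u₂) = (ω a u₁ • a + ω b u₂ • a, ω a u₁ • b + ω b u₂ • b) := by
      intro u₁ u₂
      rw [ht (u₁, u₂), hΩ₂app]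
      apply Prod.ext <;> simp [add_smul, ← ha, ← hb]
    have e : ∀ w : W, ω a w • a + ω b w • b + ω s w • s = 0 := by
      intro w
      have h2 : Y w = -(ω a w • a + ω b w • b) := by rw [hYeq]; simp
      rw [hs w] at h2
      linear_combination (norm := module) h2
    have hdep : ¬ LinearIndependent ℂ ![a, b] := by
      intro hLI
      have hpair := LinearIndependent.pair_iff.mp hLI
      have hane : a ≠ 0 := by
        have := hLI.ne_zero 0; simpa using this
      by_cases hs0 : ∀ w, ω s w = 0
      · have hz : ∀ w : W, ω a w • a + ω b w • b = 0 := fun w => by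
          have := e w; rw [hs0 w, zero_smul, add_zero] at this; exact this
        exact hane (hω_nondeg a (fun w => (hpair _ _ (hz w)).1))
      · push_neg at hs0
        obtain ⟨w₀, hw₀⟩ := hs0
        have comb : ∀ w : W,
            (ω s w₀ * ω a w - ω s w * ω a w₀) • a +
            (ω s w₀ * ω b w - ω s w * ω b w₀) • b = 0 := by
          intro w
          linear_combination (norm := module) ω s w₀ • e w - ω s w • e w₀
        have hca : ∀ w : W, ω s w₀ * ω a w = ω s w * ω a w₀ :=
          fun w => sub_eq_zero.mp (hpair _ _ (comb w)).1
        have hcb : ∀ w : W, ω s w₀ * ω b w = ω s w * ω b w₀ :=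
          fun w => sub_eq_zero.mp (hpair _ _ (comb w)).2
        have hA : ω s w₀ • a = ω a w₀ • s := by
          apply sub_eq_zero.mp
          apply hω_nondeg
          intro w
          simp only [map_sub, map_smul, LinearMap.sub_apply, LinearMap.smul_apply,
            smul_eq_mul]
          linear_combination hca w
        have hB : ω s w₀ • b = ω b w₀ • s := by
          apply sub_eq_zero.mp
          apply hω_nondeg
          intro w
          simp only [map_sub, map_smul, LinearMap.sub_apply, LinearMap.smul_apply,
            smul_eq_mul]
          linear_combination hcb w
        have hfin : (ω s w₀ * ω b w₀) • a + (-(ω s w₀ * ω a w₀)) • b = 0 := by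
          linear_combination (norm := module) ω b w₀ • hA - ω a w₀ • hB
        obtain ⟨h1, h2⟩ := hpair _ _ hfin
        have haw : ω a w₀ = 0 := by
          rcases mul_eq_zero.mp (neg_eq_zero.mp h2) with h | h
          · exact absurd h hw₀
          · exact h
        have ha0 : a = 0 := by
          have := hA
          rw [haw, zero_smul] at this
          exact (smul_eq_zero.mp this).resolve_left hw₀
        exact hane ha0
    exact ⟨a, b, hdep, hYeq, hZeq⟩
  · rintro ⟨a, b, hdep, hYeq, hZeq⟩
    have hZp : ∀ p : W × W, Z p = (ω a p.1 + ω b p.2) • ((a, b) : W × W) := by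
      intro p
      rw [show Z p = Z (p.1, p.2) from rfl, hZeq p.1 p.2]
      apply Prod.ext <;> simp [add_smul]
    refine ⟨?_, ?_, ?_, ?_, ?_⟩
    · intro u w
      rw [hYeq]
      simp only [LinearMap.neg_apply, LinearMap.add_apply, LinearMap.smulRight_apply,
        map_neg, map_add, map_smul, LinearMap.smul_apply, smul_eq_mul]
      linear_combination (-(ω a w)) * hskew u a + (-(ω b w)) * hskew u b
    · intro p q
      rw [hZp p, hZp q]
      simp only [Prod.smul_fst, Prod.smul_snd, map_smul, LinearMap.smul_apply,
        smul_eq_mul]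
      linear_combination (ω a q.1 + ω b q.2) * hskew p.1 a +
        (ω a q.1 + ω b q.2) * hskew p.2 b
    · intro T hT
      have hYT : Y ∘ₗ T =
          -((((ω a).comp T).smulRight a) + (((ω b).comp T).smulRight b)) := by
        ext u; simp [hYeq]
      have hZT : Z ∘ₗ T.prodMap T =
          (((ω a).comp (T.comp (LinearMap.fst ℂ W W))).smulRight ((a, b) : W × W)) +
          (((ω b).comp (T.comp (LinearMap.snd ℂ W W))).smulRight ((a, b) : W × W)) := by
        apply LinearMap.ext
        intro p
        rw [LinearMap.comp_apply, LinearMap.prodMap_apply, hZp (T p.1, T p.2)]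
        apply Prod.ext <;> simp [add_smul]
      rw [hYT, hZT, map_neg, map_add, map_add, trace_smulRight_aux,
        trace_smulRight_aux, trace_smulRight_aux, trace_smulRight_aux]
      simp only [LinearMap.comp_apply, LinearMap.fst_apply, LinearMap.snd_apply]
      ring
    · rw [LinearIndependent.pair_iff] at hdep
      push_neg at hdep
      obtain ⟨c, d, hcd, hne⟩ := hdep
      by_cases hc : c = 0
      · have hd : d ≠ 0 := hne hc
        have hb0 : b = 0 := by
          rw [hc, zero_smul, zero_add] at hcd
          exact (smul_eq_zero.mp hcd).resolve_left hd
        apply rank_le_one_of_range_le_span Y a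
        intro u
        rw [hYeq]
        simp only [LinearMap.neg_apply, LinearMap.add_apply, LinearMap.smulRight_apply,
          hb0, smul_zero, add_zero]
        exact Submodule.neg_mem _ (Submodule.smul_mem _ _ (Submodule.mem_span_singleton_self a))
      · have hab : a ∈ Submodule.span ℂ ({b} : Set W) := by
          rw [Submodule.mem_span_singleton]
          refine ⟨-(c⁻¹ * d), ?_⟩
          have h1 : c • a = -(d • b) := eq_neg_of_add_eq_zero_left hcd
          have h2 := congrArg (fun x : W => c⁻¹ • x) h1
          simp only [smul_smul, inv_mul_cancel₀ hc, one_smul, smul_neg] at h2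
          rw [h2, neg_smul]
        apply rank_le_one_of_range_le_span Y b
        intro u
        rw [hYeq]
        simp only [LinearMap.neg_apply, LinearMap.add_apply, LinearMap.smulRight_apply]
        exact Submodule.neg_mem _ (Submodule.add_mem _ (Submodule.smul_mem _ _ hab)
          (Submodule.smul_mem _ _ (Submodule.mem_span_singleton_self b)))
    · apply rank_le_one_of_range_le_span Z ((a, b) : W × W)
      intro p
      rw [hZp p]
      exact Submodule.smul_mem _ _ (Submodule.mem_span_singleton_self _)
end

section
/- Let 𝔲 be a finite-dimensional nilpotent complex Lie algebra and let M be a Lie module over 𝔲 such that the unital associative subalgebra of End_ℂ(M) generated by the action operators {m ↦ x · m : x ∈ 𝔲} is finite-dimensional (equivalently, the annihilator of M in U(𝔲) has finite codimension). Then the set of linear functionals χ : 𝔲 → ℂ for which the simultaneous eigenspace {v ∈ M : x · v = χ(x) · v for all x ∈ 𝔲} is nonzero is finite. (The finiteness of eigencharacters step in the proof of Proposition 4.4 of the paper.) -/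
/-- An operator lying in a finite-dimensional subalgebra of `End ℂ M` has only
finitely many eigenvalues. -/
lemma eigenvalues_finite_of_mem_fd_subalgebra {M : Type*} [AddCommGroup M] [Module ℂ M]
    (A : Subalgebra ℂ (Module.End ℂ M)) [FiniteDimensional ℂ A]
    (T : Module.End ℂ M) (hT : T ∈ A) :
    {c : ℂ | ∃ v : M, v ≠ 0 ∧ T v = c • v}.Finite := by
  have : Algebra.IsIntegral ℂ A := Algebra.IsIntegral.of_finite ℂ A
  obtain ⟨p, hpmonic, hp⟩ := this.isIntegral ⟨T, hT⟩
  have hp0 : Polynomial.aeval (⟨T, hT⟩ : A) p = 0 := hp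
  have hp' : Polynomial.aeval T p = 0 := by
    have : Polynomial.aeval (A.val ⟨T, hT⟩) p = A.val (Polynomial.aeval ⟨T, hT⟩ p) :=
      Polynomial.aeval_algHom_apply A.val ⟨T, hT⟩ p
    simpa [hp0] using this
  have hroots : {c : ℂ | ∃ v : M, v ≠ 0 ∧ T v = c • v} ⊆ {c : ℂ | p.IsRoot c} := by
    rintro c ⟨v, hv, hTv⟩
    have hev : T.HasEigenvector c v :=
      ⟨Module.End.mem_eigenspace_iff.2 hTv, hv⟩
    have := Module.End.aeval_apply_of_hasEigenvector hev (p := p)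
    rw [hp'] at this
    have : p.eval c • v = 0 := this.symm
    exact Or.resolve_right (smul_eq_zero.1 this) hv
  exact Set.Finite.subset (Polynomial.finite_setOf_isRoot hpmonic.ne_zero) hroots

/-- finiteness of eigencharacters in Proposition 4.4 of the paper: if a
finite-dimensional nilpotent complex Lie algebra `𝔲` acts on a module `M` so that the unital
associative subalgebra of `End ℂ M` generated by the action operators is finite-dimensional,
then only finitely many linear functionals `χ : 𝔲 → ℂ` admit a nonzero simultaneous
eigenvector. -/
theorem finite_eigencharacters_of_nilpotent_finite_action
    (𝔲 : Type*) [LieRing 𝔲] [LieAlgebra ℂ 𝔲] [FiniteDimensional ℂ 𝔲]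
    [LieRing.IsNilpotent 𝔲]
    (M : Type*) [AddCommGroup M] [Module ℂ M] [LieRingModule 𝔲 M] [LieModule ℂ 𝔲 M]
    (hfin : FiniteDimensional ℂ
      (Algebra.adjoin ℂ (Set.range fun x : 𝔲 => (LieModule.toEnd ℂ 𝔲 M x : Module.End ℂ M)))) :
    {χ : 𝔲 →ₗ[ℂ] ℂ | ∃ v : M, v ≠ 0 ∧ ∀ x : 𝔲, ⁅x, v⁆ = χ x • v}.Finite := by
  set A := Algebra.adjoin ℂ (Set.range fun x : 𝔲 => (LieModule.toEnd ℂ 𝔲 M x : Module.End ℂ M))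
  obtain ⟨s, ⟨b⟩⟩ := Module.Basis.exists_basis ℂ 𝔲
  haveI : Fintype s := FiniteDimensional.fintypeBasisIndex b
  set S := {χ : 𝔲 →ₗ[ℂ] ℂ | ∃ v : M, v ≠ 0 ∧ ∀ x : 𝔲, ⁅x, v⁆ = χ x • v}
  have hFinEach : ∀ i : s,
      {c : ℂ | ∃ v : M, v ≠ 0 ∧ (LieModule.toEnd ℂ 𝔲 M (b i)) v = c • v}.Finite := fun i =>
    eigenvalues_finite_of_mem_fd_subalgebra A _
      (Algebra.subset_adjoin ⟨b i, rfl⟩)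
  have himg : (fun χ : 𝔲 →ₗ[ℂ] ℂ => fun i : s => χ (b i)) '' S ⊆
      Set.pi Set.univ fun i => {c : ℂ | ∃ v : M, v ≠ 0 ∧ (LieModule.toEnd ℂ 𝔲 M (b i)) v = c • v} := by
    rintro _ ⟨χ, ⟨v, hv, hχ⟩, rfl⟩ i _
    exact ⟨v, hv, by simpa using hχ (b i)⟩
  have hfinimg : ((fun χ : 𝔲 →ₗ[ℂ] ℂ => fun i : s => χ (b i)) '' S).Finite :=
    Set.Finite.subset (Set.Finite.pi fun i => hFinEach i) himg
  refine Set.Finite.of_finite_image hfinimg ?_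
  intro χ₁ _ χ₂ _ h
  exact b.ext fun i => congrFun h i
end
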